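/- For f, g ∈ H¹(ℝ), the inequality |∫ f² g| ≤ ‖f'‖₂^{1/2} ‖f‖₂^{3/2} ‖g‖₂ holds. -/

import Mathlib

open MeasureTheory Real

open Filter Set in
private lemma aux_sq_le' (f f' : ℝ → ℝ)
    (hf : ∀ x, HasDerivAt f (f' x) x)
    (hf2 : Integrable (fun x => (f x) ^ 2))
    (hf'2 : Integrable (fun x => (f' x) ^ 2)) :
    ∀ x, (f x) ^ 2 ≤ ∫ t, |f t * f' t| := by
  have hfc : Continuous f := continuous_iff_continuousAt.mpr fun x => (hf x).continuousAt
  have hf'm : AEStronglyMeasurable f' (volume : Measure ℝ) := by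
    have : f' = deriv f := funext fun x => ((hf x).deriv).symm
    rw [this]
    exact (stronglyMeasurable_deriv f).aestronglyMeasurable
  have hmul : AEStronglyMeasurable (fun t => f t * f' t) (volume : Measure ℝ) :=
    hfc.aestronglyMeasurable.mul hf'm
  have hint : Integrable (fun t => f t * f' t) := by
    refine Integrable.mono' ((hf2.add hf'2).div_const 2) hmul ?_
    filter_upwards with t
    simp only [Pi.add_apply]
    have h1 := sq_nonneg (f t - f' t)
    have h2 := sq_nonneg (f t + f' t)
    rw [Real.norm_eq_abs, abs_mul]
    rcases abs_cases (f t) with ⟨e1, _⟩ | ⟨e1, _⟩ <;>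
      rcases abs_cases (f' t) with ⟨e2, _⟩ | ⟨e2, _⟩ <;> rw [e1, e2] <;> nlinarith
  have hh : ∀ t, HasDerivAt (fun t => f t ^ 2) (2 * f t * f' t) t := by
    intro t
    have := (hf t).fun_pow 2
    simpa using this
  have hh'int : Integrable (fun t => 2 * f t * f' t) := by
    simpa [mul_assoc] using hint.const_mul 2
  have htop : Tendsto (fun t => f t ^ 2) atTop (nhds 0) :=
    tendsto_zero_of_hasDerivAt_of_integrableOn_Ioi (a := 0) (fun t _ => hh t)
      hh'int.integrableOn hf2.integrableOn
  have hbot : Tendsto (fun t => f t ^ 2) atBot (nhds 0) :=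
    tendsto_zero_of_hasDerivAt_of_integrableOn_Iic (a := 0) (fun t _ => hh t)
      hh'int.integrableOn hf2.integrableOn
  intro x
  have e1 : ∫ t in Iic x, 2 * f t * f' t = f x ^ 2 - 0 :=
    integral_Iic_of_hasDerivAt_of_tendsto' (fun t _ => hh t) hh'int.integrableOn hbot
  have e2 : ∫ t in Ioi x, 2 * f t * f' t = 0 - f x ^ 2 :=
    integral_Ioi_of_hasDerivAt_of_tendsto' (fun t _ => hh t) hh'int.integrableOn htop
  have etot : (∫ t in Iic x, |2 * f t * f' t|) + ∫ t in Ioi x, |2 * f t * f' t|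
      = ∫ t, |2 * f t * f' t| := by
    have := integral_add_compl (measurableSet_Iic (a := x)) hh'int.abs
    simpa [compl_Iic] using this
  have b1 : (∫ t in Iic x, 2 * f t * f' t) ≤ ∫ t in Iic x, |2 * f t * f' t| := by
    have := norm_integral_le_integral_norm (μ := volume.restrict (Iic x))
      (f := fun t => 2 * f t * f' t)
    simp only [Real.norm_eq_abs] at this
    exact (le_abs_self _).trans this
  have b2 : -(∫ t in Ioi x, 2 * f t * f' t) ≤ ∫ t in Ioi x, |2 * f t * f' t| := by
    have := norm_integral_le_integral_norm (μ := volume.restrict (Ioi x))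
      (f := fun t => 2 * f t * f' t)
    simp only [Real.norm_eq_abs] at this
    exact (neg_le_abs _).trans this
  have habs : ∫ t, |2 * f t * f' t| = 2 * ∫ t, |f t * f' t| := by
    have e : (fun t => |2 * f t * f' t|) = fun t => 2 * |f t * f' t| :=
      funext fun t => by rw [mul_assoc, abs_mul, abs_two]
    rw [e, integral_const_mul]
  linarith [e1, e2, b1, b2, habs.symm.trans etot.symm]

open Filter Set in
private lemma aux_cs' (u v : ℝ → ℝ) (hum : AEStronglyMeasurable u (volume : Measure ℝ))
    (hvm : AEStronglyMeasurable v (volume : Measure ℝ))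
    (hu2 : Integrable (fun x => (u x) ^ 2)) (hv2 : Integrable (fun x => (v x) ^ 2)) :
    ∫ x, |u x * v x| ≤ (∫ x, (u x) ^ 2) ^ ((1:ℝ)/2) * (∫ x, (v x) ^ 2) ^ ((1:ℝ)/2) := by
  have hpq : (2:ℝ).HolderConjugate 2 := ⟨by norm_num, by norm_num, by norm_num⟩
  have h2 : ENNReal.ofReal (2:ℝ) = 2 := by norm_num
  have hu : MemLp (fun x => |u x|) (ENNReal.ofReal (2:ℝ)) (volume : Measure ℝ) := by
    rw [h2, memLp_two_iff_integrable_sq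
      (by simpa [Real.norm_eq_abs] using hum.norm : AEStronglyMeasurable (fun x => |u x|) volume)]
    simpa [sq_abs] using hu2
  have hv : MemLp (fun x => |v x|) (ENNReal.ofReal (2:ℝ)) (volume : Measure ℝ) := by
    rw [h2, memLp_two_iff_integrable_sq
      (by simpa [Real.norm_eq_abs] using hvm.norm : AEStronglyMeasurable (fun x => |v x|) volume)]
    simpa [sq_abs] using hv2
  have := integral_mul_le_Lp_mul_Lq_of_nonneg (μ := volume) hpq
    (Filter.Eventually.of_forall fun x => abs_nonneg (u x))
    (Filter.Eventually.of_forall fun x => abs_nonneg (v x)) hu hv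
  calc ∫ x, |u x * v x| = ∫ x, |u x| * |v x| := by simp [abs_mul]
    _ ≤ (∫ x, |u x| ^ (2:ℝ)) ^ ((1:ℝ)/2) * (∫ x, |v x| ^ (2:ℝ)) ^ ((1:ℝ)/2) := this
    _ = (∫ x, (u x) ^ 2) ^ ((1:ℝ)/2) * (∫ x, (v x) ^ 2) ^ ((1:ℝ)/2) := by
        congr 1 <;> · congr 1; apply integral_congr_ae; filter_upwards with x
                      rw [show (2:ℝ) = ((2:ℕ):ℝ) by norm_num, Real.rpow_natCast, sq_abs]

/-- For `f, g ∈ H¹(ℝ)`: `|∫ f² g| ≤ ‖f'‖₂^(1/2) ‖f‖₂^(3/2) ‖g‖₂`, i.e.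
`|∫ f² g| ≤ (∫ f'²)^(1/4) (∫ f²)^(3/4) (∫ g²)^(1/2)`. -/
theorem stmt2 (f f' g g' : ℝ → ℝ)
    (hf : ∀ x, HasDerivAt f (f' x) x)
    (hg : ∀ x, HasDerivAt g (g' x) x)
    (hf2 : Integrable (fun x => (f x) ^ 2))
    (hf'2 : Integrable (fun x => (f' x) ^ 2))
    (hg2 : Integrable (fun x => (g x) ^ 2))
    (hg'2 : Integrable (fun x => (g' x) ^ 2))
    (hfg : Integrable (fun x => (f x) ^ 2 * g x)) :
    |∫ x, (f x) ^ 2 * g x| ≤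
      (∫ x, (f' x) ^ 2) ^ ((1 : ℝ) / 4) * (∫ x, (f x) ^ 2) ^ ((3 : ℝ) / 4)
        * (∫ x, (g x) ^ 2) ^ ((1 : ℝ) / 2) := by
  have aux_sq_le := aux_sq_le' f f' hf hf2 hf'2
  have aux_cs := aux_cs'
  set A := ∫ x, (f' x) ^ 2 with hA
  set B := ∫ x, (f x) ^ 2 with hB
  set G := ∫ x, (g x) ^ 2 with hG
  have hA0 : 0 ≤ A := integral_nonneg fun x => sq_nonneg _
  have hB0 : 0 ≤ B := integral_nonneg fun x => sq_nonneg _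
  have hG0 : 0 ≤ G := integral_nonneg fun x => sq_nonneg _
  have hfc : Continuous f := continuous_iff_continuousAt.mpr fun x => (hf x).continuousAt
  have hgc : Continuous g := continuous_iff_continuousAt.mpr fun x => (hg x).continuousAt
  have hf'm : AEStronglyMeasurable f' (volume : Measure ℝ) := by
    have : f' = deriv f := funext fun x => ((hf x).deriv).symm
    rw [this]; exact (stronglyMeasurable_deriv f).aestronglyMeasurable
  set I := ∫ t, |f t * f' t| with hI
  have hI0 : 0 ≤ I := integral_nonneg fun x => abs_nonneg _
  have hIcs : I ≤ B ^ ((1:ℝ)/2) * A ^ ((1:ℝ)/2) :=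
    aux_cs f f' hfc.aestronglyMeasurable hf'm hf2 hf'2
  have hf4int : Integrable (fun x => (f x) ^ 4) := by
    refine Integrable.mono' (hf2.const_mul I) ((hfc.pow 4).aestronglyMeasurable) ?_
    filter_upwards with x
    rw [Real.norm_eq_abs, abs_of_nonneg (by positivity)]
    calc (f x) ^ 4 = (f x) ^ 2 * (f x) ^ 2 := by ring
      _ ≤ I * (f x) ^ 2 := mul_le_mul_of_nonneg_right (aux_sq_le x) (sq_nonneg _)
  have hf4 : ∫ x, (f x) ^ 4 ≤ I * B := by
    calc ∫ x, (f x) ^ 4 ≤ ∫ x, I * (f x) ^ 2 := by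
          refine integral_mono hf4int (hf2.const_mul I) fun x => ?_
          calc (f x) ^ 4 = (f x) ^ 2 * (f x) ^ 2 := by ring
            _ ≤ I * (f x) ^ 2 := mul_le_mul_of_nonneg_right (aux_sq_le x) (sq_nonneg _)
      _ = I * B := integral_const_mul _ _
  have hmain : |∫ x, (f x) ^ 2 * g x| ≤ (∫ x, (f x) ^ 4) ^ ((1:ℝ)/2) * G ^ ((1:ℝ)/2) := by
    have h1 : |∫ x, (f x) ^ 2 * g x| ≤ ∫ x, |(f x) ^ 2 * g x| := by
      simpa only [Real.norm_eq_abs] using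
        norm_integral_le_integral_norm (μ := volume) (f := fun x => (f x) ^ 2 * g x)
    have h2 := aux_cs (fun x => (f x) ^ 2) g ((hfc.pow 2).aestronglyMeasurable)
      hgc.aestronglyMeasurable (by simpa [← pow_mul] using hf4int) hg2
    simp only [← pow_mul] at h2
    norm_num at h2
    exact h1.trans (le_of_eq_of_le (integral_congr_ae (by filter_upwards with x; simp [abs_mul])) h2)
  have hfin : (∫ x, (f x) ^ 4) ^ ((1:ℝ)/2) ≤ A ^ ((1:ℝ)/4) * B ^ ((3:ℝ)/4) := by
    have h0 : 0 ≤ ∫ x, (f x) ^ 4 := integral_nonneg fun x => by positivity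
    have step1 : (∫ x, (f x) ^ 4) ^ ((1:ℝ)/2) ≤ (I * B) ^ ((1:ℝ)/2) :=
      Real.rpow_le_rpow h0 hf4 (by norm_num)
    have step2 : (I * B) ^ ((1:ℝ)/2) ≤ (B ^ ((1:ℝ)/2) * A ^ ((1:ℝ)/2) * B) ^ ((1:ℝ)/2) :=
      Real.rpow_le_rpow (by positivity) (mul_le_mul_of_nonneg_right hIcs hB0) (by norm_num)
    have step3 : (B ^ ((1:ℝ)/2) * A ^ ((1:ℝ)/2) * B) ^ ((1:ℝ)/2)
        = A ^ ((1:ℝ)/4) * B ^ ((3:ℝ)/4) := by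
      have hBB : B ^ ((1:ℝ)/2) * B = B ^ ((3:ℝ)/2) := by
        rw [show B ^ ((3:ℝ)/2) = B ^ ((1:ℝ)/2 + 1) by norm_num,
          Real.rpow_add' hB0 (by norm_num), Real.rpow_one]
      rw [mul_comm (B ^ ((1:ℝ)/2)) (A ^ ((1:ℝ)/2)), mul_assoc, hBB,
        Real.mul_rpow (by positivity) (by positivity),
        ← Real.rpow_mul hA0, ← Real.rpow_mul hB0]
      norm_num
    exact step1.trans (step2.trans_eq step3)
  calc |∫ x, (f x) ^ 2 * g x| ≤ (∫ x, (f x) ^ 4) ^ ((1:ℝ)/2) * G ^ ((1:ℝ)/2) := hmain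
    _ ≤ A ^ ((1:ℝ)/4) * B ^ ((3:ℝ)/4) * G ^ ((1:ℝ)/2) :=
        mul_le_mul_of_nonneg_right hfin (by positivity)
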